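/- Let 𝒜 ⊆ ℕ be a sequence and h ≥ 1 an integer. Then M_*(s_{𝒜,h}) = h·M_*(A) and M^*(s_{𝒜,h}) = h·M^*(A), where the equalities are taken in [0,+∞] (with h·(+∞) = +∞). -/

import Mathlib

open Filter Asymptotics MeasureTheory

/-- Counting function `A(x) = |𝒜 ∩ [0,x]|`. -/
noncomputable def cntA (A : Set ℕ) (x : ℝ) : ℕ :=
  {n : ℕ | n ∈ A ∧ (n : ℝ) ≤ x}.ncard

/-- The increasing enumeration `a₀ < a₁ < ⋯` of a set `A ⊆ ℕ`. -/
noncomputable def seqA (A : Set ℕ) (n : ℕ) : ℕ := Nat.nth (· ∈ A) n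

/-- `A` is an OR sequence: `A(2x) = O(A(x))`. -/
def ORseq (A : Set ℕ) : Prop :=
  (fun x : ℝ => (cntA A (2 * x) : ℝ)) =O[atTop] (fun x : ℝ => (cntA A x : ℝ))

/-- `A` is a PI sequence: `a_{2n} = O(a_n)`. -/
def PIseq (A : Set ℕ) : Prop :=
  (fun n : ℕ => (seqA A (2 * n) : ℝ)) =O[atTop] (fun n : ℕ => (seqA A n : ℝ))

/-- `A` is an OR₊ sequence: an infinite subset of ℕ that is both OR and PI. -/
def ORplus (A : Set ℕ) : Prop := A.Infinite ∧ ORseq A ∧ PIseq A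

/-- `sA A h x` is the number of ordered `h`-tuples of elements of `A` with sum at most `x`. -/
noncomputable def sA (A : Set ℕ) (h : ℕ) (x : ℝ) : ℕ :=
  {t : Fin h → ℕ | (∀ i, t i ∈ A) ∧ ((∑ i, t i : ℕ) : ℝ) ≤ x}.ncard

/-- `f` is almost increasing (on some tail `[x₀, ∞)`): there is `m > 0` with
`f(y) ≥ m·f(x)` for all `y ≥ x ≥ x₀`. -/
def AlmostIncreasing (f : ℝ → ℝ) : Prop :=
  ∃ m : ℝ, 0 < m ∧ ∃ x₀ : ℝ, ∀ x y : ℝ, x₀ ≤ x → x ≤ y → m * f x ≤ f y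

/-- `f` has positive increase: `x^{-γ} f(x)` is almost increasing for some `γ > 0`. -/
def PositiveIncrease (f : ℝ → ℝ) : Prop :=
  ∃ γ : ℝ, 0 < γ ∧ AlmostIncreasing (fun x : ℝ => x ^ (-γ) * f x)

/-- `f` is almost decreasing (on some tail `[x₀, ∞)`): there is `M > 0` with
`f(y) ≤ M·f(x)` for all `y ≥ x ≥ x₀`. -/
def AlmostDecreasing (f : ℝ → ℝ) : Prop :=
  ∃ M : ℝ, 0 < M ∧ ∃ x₀ : ℝ, ∀ x y : ℝ, x₀ ≤ x → x ≤ y → f y ≤ M * f x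

/-- The lower Matuszewska index `M_*(f) = sup {γ ≥ 0 : x^{-γ} f(x) is almost increasing}`,
taken in `[0, +∞]` (with `sup ∅ = 0`). -/
noncomputable def lowerMat (f : ℝ → ℝ) : ENNReal :=
  sSup {g : ENNReal | ∃ γ : NNReal, g = γ ∧
    AlmostIncreasing (fun x : ℝ => x ^ (-(γ : ℝ)) * f x)}

/-- The upper Matuszewska index `M^*(f) = inf {γ ≥ 0 : x^{-γ} f(x) is almost decreasing}`,
taken in `[0, +∞]` (with `inf ∅ = +∞`). -/
noncomputable def upperMat (f : ℝ → ℝ) : ENNReal :=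
  sInf {g : ENNReal | ∃ γ : NNReal, g = γ ∧
    AlmostDecreasing (fun x : ℝ => x ^ (-(γ : ℝ)) * f x)}

lemma finA (A : Set ℕ) (x : ℝ) : {n : ℕ | n ∈ A ∧ (n : ℝ) ≤ x}.Finite := by
  apply (Set.finite_Iic (⌈x⌉₊)).subset
  intro n hn
  simp only [Set.mem_Iic]
  exact_mod_cast hn.2.trans (Nat.le_ceil x)

lemma cntA_mono (A : Set ℕ) {x y : ℝ} (hxy : x ≤ y) : cntA A x ≤ cntA A y :=
  Set.ncard_le_ncard (fun n hn => ⟨hn.1, hn.2.trans hxy⟩) (finA A y)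

lemma finPi (A : Set ℕ) (h : ℕ) (x : ℝ) :
    (Set.pi Set.univ (fun _ : Fin h => {n : ℕ | n ∈ A ∧ (n : ℝ) ≤ x})).Finite :=
  Set.Finite.pi (fun _ => finA A x)

lemma sA_subset_pi (A : Set ℕ) (h : ℕ) (x : ℝ) :
    {t : Fin h → ℕ | (∀ i, t i ∈ A) ∧ ((∑ i, t i : ℕ) : ℝ) ≤ x} ⊆
    Set.pi Set.univ (fun _ : Fin h => {n : ℕ | n ∈ A ∧ (n : ℝ) ≤ x}) := by
  intro t ht i _
  refine ⟨ht.1 i, ?_⟩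
  refine le_trans ?_ ht.2
  exact_mod_cast Nat.cast_le.mpr (Finset.single_le_sum (f := fun i => t i) (fun _ _ => Nat.zero_le _) (Finset.mem_univ i))

lemma finS (A : Set ℕ) (h : ℕ) (x : ℝ) :
    {t : Fin h → ℕ | (∀ i, t i ∈ A) ∧ ((∑ i, t i : ℕ) : ℝ) ≤ x}.Finite :=
  (finPi A h x).subset (sA_subset_pi A h x)

lemma sA_mono (A : Set ℕ) (h : ℕ) {x y : ℝ} (hxy : x ≤ y) : sA A h x ≤ sA A h y :=
  Set.ncard_le_ncard (fun t ht => ⟨ht.1, ht.2.trans hxy⟩) (finS A h y)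

lemma ncard_pi (A : Set ℕ) (h : ℕ) (x : ℝ) :
    (Set.pi Set.univ (fun _ : Fin h => {n : ℕ | n ∈ A ∧ (n : ℝ) ≤ x})).ncard
      = (cntA A x) ^ h := by
  unfold cntA
  rw [← Nat.card_coe_set_eq, ← Nat.card_coe_set_eq,
    Nat.card_congr (Equiv.Set.univPi _), Nat.card_pi, Finset.prod_const,
    Finset.card_univ, Fintype.card_fin]

lemma sA_le (A : Set ℕ) (h : ℕ) (x : ℝ) : sA A h x ≤ (cntA A x) ^ h := by
  rw [← ncard_pi A h x]
  exact Set.ncard_le_ncard (sA_subset_pi A h x) (finPi A h x)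

lemma le_sA (A : Set ℕ) (h : ℕ) (x : ℝ) : (cntA A x) ^ h ≤ sA A h (h * x) := by
  rw [← ncard_pi A h x]
  refine Set.ncard_le_ncard ?_ (finS A h (h * x))
  intro t ht
  have h1 : ∀ i, t i ∈ A ∧ ((t i : ℝ)) ≤ x := fun i => ht i (Set.mem_univ i)
  refine ⟨fun i => (h1 i).1, ?_⟩
  push_cast
  calc (∑ i, (t i : ℝ)) ≤ ∑ _i : Fin h, x := Finset.sum_le_sum (fun i _ => (h1 i).2)
  _ = h * x := by simp [Finset.sum_const, Finset.card_univ, nsmul_eq_mul]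


section transfer

variable {a s : ℝ → ℝ} {h : ℕ}

lemma AI_up (hh : 1 ≤ h)
    (ha0 : ∀ x, 0 ≤ a x) (hs0 : ∀ x, 0 ≤ s x)
    (hsmono : ∀ ⦃x y : ℝ⦄, x ≤ y → s x ≤ s y)
    (hsle : ∀ x : ℝ, s x ≤ a x ^ (h : ℝ))
    (hles : ∀ x : ℝ, a x ^ (h : ℝ) ≤ s ((h : ℝ) * x))
    {γ : ℝ} (hγ : 0 ≤ γ)
    (H : AlmostIncreasing (fun x => x ^ (-γ) * a x)) :
    AlmostIncreasing (fun x => x ^ (-((h : ℝ) * γ)) * s x) := by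
  obtain ⟨m, hm, x₀, H⟩ := H
  have hh0 : (0:ℝ) < h := by exact_mod_cast Nat.lt_of_lt_of_le Nat.zero_lt_one hh
  set e : ℝ := (h : ℝ) * γ with he
  have he0 : 0 ≤ e := mul_nonneg hh0.le hγ
  have hmin0 : (0:ℝ) ≤ min m 1 := le_min hm.le zero_le_one
  refine ⟨min m 1 ^ (h:ℝ) * (h:ℝ) ^ (-e), by positivity, max x₀ 1, ?_⟩
  intro x y hx hxy
  have hx1 : (1:ℝ) ≤ x := le_trans (le_max_right _ _) hx
  have hx0 : x₀ ≤ x := le_trans (le_max_left _ _) hx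
  have hxp : (0:ℝ) < x := lt_of_lt_of_le zero_lt_one hx1
  have hyp : (0:ℝ) < y := lt_of_lt_of_le hxp hxy
  have expand2 : ∀ z w : ℝ, 0 < z → 0 ≤ w →
      (z ^ (-γ) * w) ^ (h:ℝ) = z ^ (-e) * w ^ (h:ℝ) := by
    intro z w hz hw
    rw [Real.mul_rpow (Real.rpow_nonneg hz.le _) hw, ← Real.rpow_mul hz.le,
      show -γ * (h:ℝ) = -e by rw [he]; ring]
  simp only []
  by_cases hc : (h:ℝ) * x ≤ y
  · set u : ℝ := y / (h:ℝ) with hu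
    have hup : 0 < u := div_pos hyp hh0
    have hxu : x ≤ u := (le_div_iff₀ hh0).mpr (by linarith [mul_comm (h:ℝ) x])
    have key : min m 1 * (x ^ (-γ) * a x) ≤ u ^ (-γ) * a u :=
      le_trans (mul_le_mul_of_nonneg_right (min_le_left m 1)
        (mul_nonneg (Real.rpow_nonneg hxp.le _) (ha0 x))) (H x u hx0 hxu)
    have keyh : (min m 1 * (x ^ (-γ) * a x)) ^ (h:ℝ) ≤ (u ^ (-γ) * a u) ^ (h:ℝ) :=
      Real.rpow_le_rpow
        (mul_nonneg hmin0 (mul_nonneg (Real.rpow_nonneg hxp.le _) (ha0 x))) key hh0.le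
    have hdiv : u ^ (-e) = y ^ (-e) * (h:ℝ) ^ e := by
      rw [hu, Real.div_rpow hyp.le hh0.le, Real.rpow_neg hh0.le, div_eq_mul_inv, inv_inv]
    have hhuy : (h:ℝ) * u = y := by rw [hu]; field_simp
    calc min m 1 ^ (h:ℝ) * (h:ℝ) ^ (-e) * (x ^ (-e) * s x)
        ≤ min m 1 ^ (h:ℝ) * (h:ℝ) ^ (-e) * (x ^ (-e) * a x ^ (h:ℝ)) := by
          refine mul_le_mul_of_nonneg_left
            (mul_le_mul_of_nonneg_left (hsle x) (Real.rpow_nonneg hxp.le _))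
            (mul_nonneg (Real.rpow_nonneg hmin0 _) (Real.rpow_nonneg hh0.le _))
      _ = (h:ℝ) ^ (-e) * (min m 1 * (x ^ (-γ) * a x)) ^ (h:ℝ) := by
          rw [Real.mul_rpow hmin0 (mul_nonneg (Real.rpow_nonneg hxp.le _) (ha0 x)),
            expand2 x (a x) hxp (ha0 x)]
          ring
      _ ≤ (h:ℝ) ^ (-e) * (u ^ (-γ) * a u) ^ (h:ℝ) :=
          mul_le_mul_of_nonneg_left keyh (Real.rpow_nonneg hh0.le _)
      _ = (h:ℝ) ^ (-e) * (u ^ (-e) * a u ^ (h:ℝ)) := by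
          rw [expand2 u (a u) hup (ha0 u)]
      _ ≤ (h:ℝ) ^ (-e) * (u ^ (-e) * s y) := by
          have h1 := hles u
          rw [hhuy] at h1
          exact mul_le_mul_of_nonneg_left
            (mul_le_mul_of_nonneg_left h1 (Real.rpow_nonneg hup.le _))
            (Real.rpow_nonneg hh0.le _)
      _ = y ^ (-e) * s y := by
          rw [hdiv, Real.rpow_neg hh0.le]
          have : (h:ℝ) ^ e ≠ 0 := ne_of_gt (Real.rpow_pos_of_pos hh0 e)
          field_simp
  · push_neg at hc
    have h1 : min m 1 ^ (h:ℝ) ≤ 1 := Real.rpow_le_one hmin0 (min_le_right m 1) hh0.le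
    calc min m 1 ^ (h:ℝ) * (h:ℝ) ^ (-e) * (x ^ (-e) * s x)
        ≤ 1 * (h:ℝ) ^ (-e) * (x ^ (-e) * s x) := by
          refine mul_le_mul_of_nonneg_right
            (mul_le_mul_of_nonneg_right h1 (Real.rpow_nonneg hh0.le _))
            (mul_nonneg (Real.rpow_nonneg hxp.le _) (hs0 x))
      _ = ((h:ℝ) * x) ^ (-e) * s x := by
          rw [Real.mul_rpow hh0.le hxp.le]; ring
      _ ≤ ((h:ℝ) * x) ^ (-e) * s y :=
          mul_le_mul_of_nonneg_left (hsmono hxy)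
            (Real.rpow_nonneg (mul_nonneg hh0.le hxp.le) _)
      _ ≤ y ^ (-e) * s y :=
          mul_le_mul_of_nonneg_right
            (Real.rpow_le_rpow_of_nonpos hyp hc.le (neg_nonpos.mpr he0)) (hs0 y)

lemma AD_up (hh : 1 ≤ h)
    (ha0 : ∀ x, 0 ≤ a x) (hs0 : ∀ x, 0 ≤ s x)
    (hsle : ∀ x : ℝ, s x ≤ a x ^ (h : ℝ))
    (hles : ∀ x : ℝ, a x ^ (h : ℝ) ≤ s ((h : ℝ) * x))
    {γ : ℝ} (hγ : 0 ≤ γ)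
    (H : AlmostDecreasing (fun x => x ^ (-γ) * a x)) :
    AlmostDecreasing (fun x => x ^ (-((h : ℝ) * γ)) * s x) := by
  obtain ⟨M, hM, x₀, H⟩ := H
  have hh0 : (0:ℝ) < h := by exact_mod_cast Nat.lt_of_lt_of_le Nat.zero_lt_one hh
  have hh1 : (1:ℝ) ≤ h := by exact_mod_cast hh
  set e : ℝ := (h : ℝ) * γ with he
  refine ⟨M ^ (h:ℝ) * (h:ℝ) ^ e, by positivity, max ((h:ℝ) * x₀) 1, ?_⟩
  intro x y hx hxy
  have hx1 : (1:ℝ) ≤ x := le_trans (le_max_right _ _) hx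
  have hx0 : (h:ℝ) * x₀ ≤ x := le_trans (le_max_left _ _) hx
  have hxp : (0:ℝ) < x := lt_of_lt_of_le zero_lt_one hx1
  have hyp : (0:ℝ) < y := lt_of_lt_of_le hxp hxy
  have expand2 : ∀ z w : ℝ, 0 < z → 0 ≤ w →
      (z ^ (-γ) * w) ^ (h:ℝ) = z ^ (-e) * w ^ (h:ℝ) := by
    intro z w hz hw
    rw [Real.mul_rpow (Real.rpow_nonneg hz.le _) hw, ← Real.rpow_mul hz.le,
      show -γ * (h:ℝ) = -e by rw [he]; ring]
  simp only []
  set v : ℝ := x / (h:ℝ) with hv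
  have hvp : 0 < v := div_pos hxp hh0
  have hv0 : x₀ ≤ v := (le_div_iff₀ hh0).mpr (by linarith [mul_comm (h:ℝ) x₀])
  have hvy : v ≤ y := le_trans (div_le_self hxp.le hh1) hxy
  have key := H v y hv0 hvy
  have keyh : (y ^ (-γ) * a y) ^ (h:ℝ) ≤ (M * (v ^ (-γ) * a v)) ^ (h:ℝ) :=
    Real.rpow_le_rpow (mul_nonneg (Real.rpow_nonneg hyp.le _) (ha0 y)) key hh0.le
  have hdiv : v ^ (-e) = x ^ (-e) * (h:ℝ) ^ e := by
    rw [hv, Real.div_rpow hxp.le hh0.le, Real.rpow_neg hh0.le, div_eq_mul_inv, inv_inv]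
  have hhvx : (h:ℝ) * v = x := by rw [hv]; field_simp
  calc y ^ (-e) * s y
      ≤ y ^ (-e) * a y ^ (h:ℝ) :=
        mul_le_mul_of_nonneg_left (hsle y) (Real.rpow_nonneg hyp.le _)
    _ = (y ^ (-γ) * a y) ^ (h:ℝ) := (expand2 y (a y) hyp (ha0 y)).symm
    _ ≤ (M * (v ^ (-γ) * a v)) ^ (h:ℝ) := keyh
    _ = M ^ (h:ℝ) * (v ^ (-e) * a v ^ (h:ℝ)) := by
        rw [Real.mul_rpow hM.le (mul_nonneg (Real.rpow_nonneg hvp.le _) (ha0 v)),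
          expand2 v (a v) hvp (ha0 v)]
    _ ≤ M ^ (h:ℝ) * (v ^ (-e) * s x) := by
        have h1 := hles v
        rw [hhvx] at h1
        exact mul_le_mul_of_nonneg_left
          (mul_le_mul_of_nonneg_left h1 (Real.rpow_nonneg hvp.le _))
          (Real.rpow_nonneg hM.le _)
    _ = M ^ (h:ℝ) * (h:ℝ) ^ e * (x ^ (-e) * s x) := by
        rw [hdiv]; ring

lemma AI_down (hh : 1 ≤ h)
    (ha0 : ∀ x, 0 ≤ a x) (hs0 : ∀ x, 0 ≤ s x)
    (hamono : ∀ ⦃x y : ℝ⦄, x ≤ y → a x ≤ a y)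
    (hsle : ∀ x : ℝ, s x ≤ a x ^ (h : ℝ))
    (hles : ∀ x : ℝ, a x ^ (h : ℝ) ≤ s ((h : ℝ) * x))
    {β : ℝ} (hβ : 0 ≤ β)
    (H : AlmostIncreasing (fun x => x ^ (-β) * s x)) :
    AlmostIncreasing (fun x => x ^ (-(β / (h : ℝ))) * a x) := by
  obtain ⟨m, hm, x₀, H⟩ := H
  have hh0 : (0:ℝ) < h := by exact_mod_cast Nat.lt_of_lt_of_le Nat.zero_lt_one hh
  have hh1 : (1:ℝ) ≤ h := by exact_mod_cast hh
  set r : ℝ := β / (h:ℝ) with hr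
  have hr0 : 0 ≤ r := div_nonneg hβ hh0.le
  have hrh : r * (h:ℝ) = β := by rw [hr]; field_simp
  have hmin0 : (0:ℝ) ≤ min m 1 := le_min hm.le zero_le_one
  set c : ℝ := (min m 1 * (h:ℝ) ^ (-β)) ^ ((h:ℝ)⁻¹) with hcdef
  have hbase0 : (0:ℝ) ≤ min m 1 * (h:ℝ) ^ (-β) :=
    mul_nonneg hmin0 (Real.rpow_nonneg hh0.le _)
  have hc0 : 0 < c := Real.rpow_pos_of_pos
    (mul_pos (lt_min hm zero_lt_one) (Real.rpow_pos_of_pos hh0 _)) _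
  have hcpow : c ^ (h:ℝ) = min m 1 * (h:ℝ) ^ (-β) := by
    rw [hcdef, ← Real.rpow_mul hbase0, inv_mul_cancel₀ hh0.ne', Real.rpow_one]
  refine ⟨c, hc0, max x₀ 1, ?_⟩
  intro x y hx hxy
  have hx1 : (1:ℝ) ≤ x := le_trans (le_max_right _ _) hx
  have hx0 : x₀ ≤ x := le_trans (le_max_left _ _) hx
  have hxp : (0:ℝ) < x := lt_of_lt_of_le zero_lt_one hx1
  have hyp : (0:ℝ) < y := lt_of_lt_of_le hxp hxy
  have expand2 : ∀ z w : ℝ, 0 < z → 0 ≤ w →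
      (z ^ (-r) * w) ^ (h:ℝ) = z ^ (-β) * w ^ (h:ℝ) := by
    intro z w hz hw
    rw [Real.mul_rpow (Real.rpow_nonneg hz.le _) hw, ← Real.rpow_mul hz.le,
      show -r * (h:ℝ) = -β by rw [← hrh]; ring]
  simp only []
  by_cases hc : (h:ℝ) * x ≤ y
  · refine (Real.rpow_le_rpow_iff
      (mul_nonneg hc0.le (mul_nonneg (Real.rpow_nonneg hxp.le _) (ha0 x)))
      (mul_nonneg (Real.rpow_nonneg hyp.le _) (ha0 y)) hh0).mp ?_
    rw [Real.mul_rpow hc0.le (mul_nonneg (Real.rpow_nonneg hxp.le _) (ha0 x)),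
      expand2 x (a x) hxp (ha0 x), expand2 y (a y) hyp (ha0 y), hcpow]
    have hxhx : x ≤ (h:ℝ) * x := le_mul_of_one_le_left hxp.le hh1
    have hhx0 : x₀ ≤ (h:ℝ) * x := le_trans hx0 hxhx
    have hmulrpow : ((h:ℝ) * x) ^ (-β) = (h:ℝ) ^ (-β) * x ^ (-β) :=
      Real.mul_rpow hh0.le hxp.le
    calc min m 1 * (h:ℝ) ^ (-β) * (x ^ (-β) * a x ^ (h:ℝ))
        ≤ min m 1 * (h:ℝ) ^ (-β) * (x ^ (-β) * s ((h:ℝ) * x)) := by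
          refine mul_le_mul_of_nonneg_left
            (mul_le_mul_of_nonneg_left (hles x) (Real.rpow_nonneg hxp.le _))
            (mul_nonneg hmin0 (Real.rpow_nonneg hh0.le _))
      _ = min m 1 * (((h:ℝ) * x) ^ (-β) * s ((h:ℝ) * x)) := by
          rw [hmulrpow]; ring
      _ ≤ m * (((h:ℝ) * x) ^ (-β) * s ((h:ℝ) * x)) := by
          refine mul_le_mul_of_nonneg_right (min_le_left m 1)
            (mul_nonneg (Real.rpow_nonneg (by positivity) _) (hs0 _))
      _ ≤ y ^ (-β) * s y := H ((h:ℝ) * x) y hhx0 hc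
      _ ≤ y ^ (-β) * a y ^ (h:ℝ) :=
          mul_le_mul_of_nonneg_left (hsle y) (Real.rpow_nonneg hyp.le _)
  · push_neg at hc
    have hch : c ≤ (h:ℝ) ^ (-r) := by
      have h1 : min m 1 * (h:ℝ) ^ (-β) ≤ (h:ℝ) ^ (-β) :=
        mul_le_of_le_one_left (Real.rpow_nonneg hh0.le _) (min_le_right m 1)
      have h2 : c ≤ ((h:ℝ) ^ (-β)) ^ ((h:ℝ)⁻¹) :=
        Real.rpow_le_rpow hbase0 h1 (inv_nonneg.mpr hh0.le)
      calc c ≤ ((h:ℝ) ^ (-β)) ^ ((h:ℝ)⁻¹) := h2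
        _ = (h:ℝ) ^ (-r) := by
            rw [← Real.rpow_mul hh0.le, hr]; congr 1; field_simp
    calc c * (x ^ (-r) * a x)
        ≤ (h:ℝ) ^ (-r) * (x ^ (-r) * a x) :=
          mul_le_mul_of_nonneg_right hch
            (mul_nonneg (Real.rpow_nonneg hxp.le _) (ha0 x))
      _ = ((h:ℝ) * x) ^ (-r) * a x := by
          rw [Real.mul_rpow hh0.le hxp.le]; ring
      _ ≤ y ^ (-r) * a x :=
          mul_le_mul_of_nonneg_right
            (Real.rpow_le_rpow_of_nonpos hyp hc.le (neg_nonpos.mpr hr0)) (ha0 x)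
      _ ≤ y ^ (-r) * a y :=
          mul_le_mul_of_nonneg_left (hamono hxy) (Real.rpow_nonneg hyp.le _)

lemma AD_down (hh : 1 ≤ h)
    (ha0 : ∀ x, 0 ≤ a x) (hs0 : ∀ x, 0 ≤ s x)
    (hsle : ∀ x : ℝ, s x ≤ a x ^ (h : ℝ))
    (hles : ∀ x : ℝ, a x ^ (h : ℝ) ≤ s ((h : ℝ) * x))
    {β : ℝ} (hβ : 0 ≤ β)
    (H : AlmostDecreasing (fun x => x ^ (-β) * s x)) :
    AlmostDecreasing (fun x => x ^ (-(β / (h : ℝ))) * a x) := by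
  obtain ⟨M, hM, x₀, H⟩ := H
  have hh0 : (0:ℝ) < h := by exact_mod_cast Nat.lt_of_lt_of_le Nat.zero_lt_one hh
  have hh1 : (1:ℝ) ≤ h := by exact_mod_cast hh
  set r : ℝ := β / (h:ℝ) with hr
  have hrh : r * (h:ℝ) = β := by rw [hr]; field_simp
  set C : ℝ := (M * (h:ℝ) ^ β) ^ ((h:ℝ)⁻¹) with hCdef
  have hbase0 : (0:ℝ) ≤ M * (h:ℝ) ^ β := mul_nonneg hM.le (Real.rpow_nonneg hh0.le _)
  have hC0 : 0 < C := Real.rpow_pos_of_pos (mul_pos hM (Real.rpow_pos_of_pos hh0 _)) _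
  have hCpow : C ^ (h:ℝ) = M * (h:ℝ) ^ β := by
    rw [hCdef, ← Real.rpow_mul hbase0, inv_mul_cancel₀ hh0.ne', Real.rpow_one]
  refine ⟨C, hC0, max x₀ 1, ?_⟩
  intro x y hx hxy
  have hx1 : (1:ℝ) ≤ x := le_trans (le_max_right _ _) hx
  have hx0 : x₀ ≤ x := le_trans (le_max_left _ _) hx
  have hxp : (0:ℝ) < x := lt_of_lt_of_le zero_lt_one hx1
  have hyp : (0:ℝ) < y := lt_of_lt_of_le hxp hxy
  have expand2 : ∀ z w : ℝ, 0 < z → 0 ≤ w →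
      (z ^ (-r) * w) ^ (h:ℝ) = z ^ (-β) * w ^ (h:ℝ) := by
    intro z w hz hw
    rw [Real.mul_rpow (Real.rpow_nonneg hz.le _) hw, ← Real.rpow_mul hz.le,
      show -r * (h:ℝ) = -β by rw [← hrh]; ring]
  simp only []
  refine (Real.rpow_le_rpow_iff
    (mul_nonneg (Real.rpow_nonneg hyp.le _) (ha0 y))
    (mul_nonneg hC0.le (mul_nonneg (Real.rpow_nonneg hxp.le _) (ha0 x))) hh0).mp ?_
  rw [Real.mul_rpow hC0.le (mul_nonneg (Real.rpow_nonneg hxp.le _) (ha0 x)),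
    expand2 x (a x) hxp (ha0 x), expand2 y (a y) hyp (ha0 y), hCpow]
  have hxhy : x ≤ (h:ℝ) * y := le_trans hxy (le_mul_of_one_le_left hyp.le hh1)
  have hmulrpow : ((h:ℝ) * y) ^ (-β) = (h:ℝ) ^ (-β) * y ^ (-β) :=
    Real.mul_rpow hh0.le hyp.le
  have hid : y ^ (-β) = (h:ℝ) ^ β * (((h:ℝ) * y) ^ (-β)) := by
    rw [hmulrpow, ← mul_assoc, Real.rpow_neg hh0.le β]
    field_simp
  calc y ^ (-β) * a y ^ (h:ℝ)
      ≤ y ^ (-β) * s ((h:ℝ) * y) :=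
        mul_le_mul_of_nonneg_left (hles y) (Real.rpow_nonneg hyp.le _)
    _ = (h:ℝ) ^ β * (((h:ℝ) * y) ^ (-β) * s ((h:ℝ) * y)) := by
        rw [hid]; ring
    _ ≤ (h:ℝ) ^ β * (M * (x ^ (-β) * s x)) := by
        refine mul_le_mul_of_nonneg_left (H x ((h:ℝ) * y) hx0 hxhy)
          (Real.rpow_nonneg hh0.le _)
    _ ≤ (h:ℝ) ^ β * (M * (x ^ (-β) * a x ^ (h:ℝ))) := by
        refine mul_le_mul_of_nonneg_left (mul_le_mul_of_nonneg_left
          (mul_le_mul_of_nonneg_left (hsle x) (Real.rpow_nonneg hxp.le _)) hM.le)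
          (Real.rpow_nonneg hh0.le _)
    _ = M * (h:ℝ) ^ β * (x ^ (-β) * a x ^ (h:ℝ)) := by ring

end transfer


theorem stmt_16 (A : Set ℕ) (hA : A.Infinite) (h : ℕ) (hh : 1 ≤ h) :
    lowerMat (fun x : ℝ => (sA A h x : ℝ)) =
      (h : ENNReal) * lowerMat (fun x : ℝ => (cntA A x : ℝ)) ∧
    upperMat (fun x : ℝ => (sA A h x : ℝ)) =
      (h : ENNReal) * upperMat (fun x : ℝ => (cntA A x : ℝ)) := by
  set a : ℝ → ℝ := fun x => (cntA A x : ℝ) with ha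
  set s : ℝ → ℝ := fun x => (sA A h x : ℝ) with hs
  have hhn : h ≠ 0 := by omega
  have hne : (h : ENNReal) ≠ 0 := Nat.cast_ne_zero.mpr hhn
  have hnt : (h : ENNReal) ≠ ⊤ := ENNReal.natCast_ne_top h
  have hhnn : (h : NNReal) ≠ 0 := Nat.cast_ne_zero.mpr hhn
  have ha0 : ∀ x, 0 ≤ a x := fun x => Nat.cast_nonneg _
  have hs0 : ∀ x, 0 ≤ s x := fun x => Nat.cast_nonneg _
  have hamono : ∀ ⦃x y : ℝ⦄, x ≤ y → a x ≤ a y := fun x y hxy =>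
    Nat.cast_le.mpr (cntA_mono A hxy)
  have hsmono : ∀ ⦃x y : ℝ⦄, x ≤ y → s x ≤ s y := fun x y hxy =>
    Nat.cast_le.mpr (sA_mono A h hxy)
  have hsle : ∀ x : ℝ, s x ≤ a x ^ (h : ℝ) := by
    intro x
    simp only [hs, ha]
    rw [Real.rpow_natCast]
    exact_mod_cast sA_le A h x
  have hles : ∀ x : ℝ, a x ^ (h : ℝ) ≤ s ((h : ℝ) * x) := by
    intro x
    simp only [hs, ha]
    rw [Real.rpow_natCast]
    exact_mod_cast le_sA A h x
  constructor
  · -- lowerMat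
    apply le_antisymm
    · apply sSup_le
      rintro g ⟨β, rfl, hAI⟩
      have hmem : ((β / (h : NNReal) : NNReal) : ENNReal) ∈
          {g : ENNReal | ∃ γ : NNReal, g = γ ∧
            AlmostIncreasing (fun x : ℝ => x ^ (-(γ : ℝ)) * a x)} := by
        refine ⟨β / (h : NNReal), rfl, ?_⟩
        have := AI_down hh ha0 hs0 hamono hsle hles β.coe_nonneg hAI
        simpa [NNReal.coe_div, NNReal.coe_natCast] using this
      have h1 : ((β / (h : NNReal) : NNReal) : ENNReal) ≤ lowerMat a := le_sSup hmem
      calc (β : ENNReal) = (h : ENNReal) * ((β / (h : NNReal) : NNReal) : ENNReal) := by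
            rw [← ENNReal.coe_natCast, ← ENNReal.coe_mul]
            congr 1
            rw [mul_comm, div_mul_cancel₀ _ hhnn]
        _ ≤ (h : ENNReal) * lowerMat a := mul_le_mul_right h1 _
    · have h2 : lowerMat a ≤ lowerMat s / (h : ENNReal) := by
        apply sSup_le
        rintro g ⟨γ, rfl, hAI⟩
        rw [ENNReal.le_div_iff_mul_le (Or.inl hne) (Or.inl hnt)]
        have hmem : (((h : NNReal) * γ : NNReal) : ENNReal) ∈
            {g : ENNReal | ∃ γ : NNReal, g = γ ∧
              AlmostIncreasing (fun x : ℝ => x ^ (-(γ : ℝ)) * s x)} := by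
          refine ⟨(h : NNReal) * γ, rfl, ?_⟩
          have := AI_up hh ha0 hs0 hsmono hsle hles γ.coe_nonneg hAI
          simpa [NNReal.coe_mul, NNReal.coe_natCast] using this
        exact le_trans (le_of_eq (by rw [ENNReal.coe_mul, ENNReal.coe_natCast, mul_comm]))
          (le_sSup hmem)
      calc (h : ENNReal) * lowerMat a ≤ (h : ENNReal) * (lowerMat s / (h : ENNReal)) :=
            mul_le_mul_right h2 _
        _ = lowerMat s := ENNReal.mul_div_cancel hne hnt
  · -- upperMat
    apply le_antisymm
    · have h2 : upperMat s / (h : ENNReal) ≤ upperMat a := by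
        apply le_sInf
        rintro g ⟨γ, rfl, hAD⟩
        rw [ENNReal.div_le_iff_le_mul (Or.inl hne) (Or.inl hnt)]
        have hmem : (((h : NNReal) * γ : NNReal) : ENNReal) ∈
            {g : ENNReal | ∃ γ : NNReal, g = γ ∧
              AlmostDecreasing (fun x : ℝ => x ^ (-(γ : ℝ)) * s x)} := by
          refine ⟨(h : NNReal) * γ, rfl, ?_⟩
          have := AD_up hh ha0 hs0 hsle hles γ.coe_nonneg hAD
          simpa [NNReal.coe_mul, NNReal.coe_natCast] using this
        refine le_trans (sInf_le hmem) (le_of_eq ?_)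
        rw [ENNReal.coe_mul, ENNReal.coe_natCast, mul_comm]
      calc upperMat s = (h : ENNReal) * (upperMat s / (h : ENNReal)) :=
            (ENNReal.mul_div_cancel hne hnt).symm
        _ ≤ (h : ENNReal) * upperMat a := mul_le_mul_right h2 _
    · apply le_sInf
      rintro g ⟨β, rfl, hAD⟩
      have hmem : ((β / (h : NNReal) : NNReal) : ENNReal) ∈
          {g : ENNReal | ∃ γ : NNReal, g = γ ∧
            AlmostDecreasing (fun x : ℝ => x ^ (-(γ : ℝ)) * a x)} := by
        refine ⟨β / (h : NNReal), rfl, ?_⟩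
        have := AD_down hh ha0 hs0 hsle hles β.coe_nonneg hAD
        simpa [NNReal.coe_div, NNReal.coe_natCast] using this
      calc (h : ENNReal) * upperMat a
          ≤ (h : ENNReal) * ((β / (h : NNReal) : NNReal) : ENNReal) :=
            mul_le_mul_right (sInf_le hmem) _
        _ = (β : ENNReal) := by
            rw [← ENNReal.coe_natCast, ← ENNReal.coe_mul]
            congr 1
            rw [mul_comm, div_mul_cancel₀ _ hhnn]
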